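/- In the extended model with αa + βp > 0 and g strictly increasing, the variance gap G(k) = Δ·B(k)³/(B(k)+P)² is strictly increasing in contact intensity k. -/
import Mathlib

lemma aux_key (P x y : ℝ) (hP : 0 < P) (hx : 0 < x) (hxy : x < y) :
    x ^ 3 * (y + P) ^ 2 < y ^ 3 * (x + P) ^ 2 := by
  have hy : 0 < y := hx.trans hxy
  have h1 : 0 < (y - x) * (x^2*y^2 + 2*P*x*y*(x+y) + P^2*(x^2+x*y+y^2)) := by
    apply mul_pos (by linarith)
    positivity
  nlinarith [h1]

/-- In non-routine jobs (αa+βp > 0) with g strictly increasing, the variance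
gap G(k) = Δ·B(k)³/(B(k)+P)² is strictly increasing in contact intensity k. -/
theorem contact_increases_gap_nonroutine (Δ P α β a p : ℝ) (g : ℝ → ℝ)
    (hΔ : 0 < Δ) (hP : 0 < P) (hα : 0 < α) (hβ : 0 < β)
    (ha : 0 ≤ a) (hp : 0 ≤ p) (hap : 0 < α * a + β * p)
    (hg : StrictMonoOn g (Set.Ici 0)) (hg0 : g 0 = 1)
    (hgpos : ∀ k, 0 ≤ k → 0 < g k) :
    StrictMonoOn
      (fun k : ℝ => Δ * (1 + (α * a + β * p) * g k) ^ 3 /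
        ((1 + (α * a + β * p) * g k) + P) ^ 2)
      (Set.Ici 0) := by
  intro k1 hk1 k2 hk2 hk
  set c := α * a + β * p
  have hB1 : (0:ℝ) < 1 + c * g k1 := by
    have := hgpos k1 hk1
    positivity
  have hB2 : (0:ℝ) < 1 + c * g k2 := by
    have := hgpos k2 hk2
    positivity
  have hBB : 1 + c * g k1 < 1 + c * g k2 := by
    have := hg hk1 hk2 hk
    nlinarith
  have key := aux_key P (1 + c * g k1) (1 + c * g k2) hP hB1 hBB
  have hd1 : (0:ℝ) < ((1 + c * g k1) + P) ^ 2 := by positivity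
  have hd2 : (0:ℝ) < ((1 + c * g k2) + P) ^ 2 := by positivity
  simp only
  rw [div_lt_div_iff₀ hd1 hd2]
  nlinarith [key]
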